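/- If G is a finite connected simple graph with n(G) vertices, then gp(G) ≤ n(G) − diam(G) + 1, where diam(G) is the diameter of G. -/
import Mathlib


open SimpleGraph

variable {V : Type*}

/-- `S` is a general position set of `G`: no three pairwise distinct vertices of `S`
lie on a common shortest path, i.e. no `v ∈ S` lies strictly between `u, w ∈ S`. -/
def IsGPSet (G : SimpleGraph V) (S : Set V) : Prop :=
  ∀ u ∈ S, ∀ v ∈ S, ∀ w ∈ S, u ≠ v → v ≠ w → u ≠ w →
    ¬(G.Reachable u w ∧ G.dist u v + G.dist v w = G.dist u w)

/-- The general position number of `G`. -/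
noncomputable def gpNum (G : SimpleGraph V) [Fintype V] : ℕ :=
  sSup {n | ∃ S : Finset V, IsGPSet G ↑S ∧ S.card = n}

/-- On a shortest `u,v`-walk, each vertex `z` satisfies
`dist u z = length of takeUntil` and `dist z v = rest`. -/
lemma dist_takeUntil [DecidableEq V] {G : SimpleGraph V} (hG : G.Connected) {u v : V} (p : G.Walk u v)
    (hp : p.length = G.dist u v) {z : V} (hz : z ∈ p.support) :
    G.dist u z = (p.takeUntil z hz).length ∧
    G.dist z v = p.length - (p.takeUntil z hz).length := by
  have hsplit := congrArg SimpleGraph.Walk.length (p.take_spec hz)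
  rw [SimpleGraph.Walk.length_append] at hsplit
  have h1 : G.dist u z ≤ (p.takeUntil z hz).length := SimpleGraph.dist_le _
  have h2 : G.dist z v ≤ (p.dropUntil z hz).length := SimpleGraph.dist_le _
  have h3 : G.dist u v ≤ G.dist u z + G.dist z v := hG.dist_triangle
  omega

/-- Key geometric lemma: for two vertices on a shortest walk,
their distance is at most the difference of their distances to the start. -/
lemma dist_le_sub_on_geodesic [DecidableEq V] {G : SimpleGraph V} (hG : G.Connected) {u v : V}
    (p : G.Walk u v) (hp : p.length = G.dist u v) {a c : V}
    (ha : a ∈ p.support) (hc : c ∈ p.support) (hle : G.dist u a ≤ G.dist u c) :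
    G.dist a c ≤ G.dist u c - G.dist u a := by
  obtain ⟨hia, hia'⟩ := dist_takeUntil hG p hp ha
  obtain ⟨hic, hic'⟩ := dist_takeUntil hG p hp hc
  have hcL : (p.takeUntil c hc).length ≤ p.length := p.length_takeUntil_le hc
  have haL : (p.takeUntil a ha).length ≤ p.length := p.length_takeUntil_le ha
  have hmem : a ∈ (p.takeUntil c hc).support ∨ a ∈ (p.dropUntil c hc).support := by
    rw [← SimpleGraph.Walk.mem_support_append_iff, p.take_spec hc]; exact ha
  rcases hmem with hq | hr
  · -- a on the initial segment up to c
    set q := p.takeUntil c hc with hqdef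
    have hsplit := congrArg SimpleGraph.Walk.length (q.take_spec hq)
    rw [SimpleGraph.Walk.length_append] at hsplit
    have h1 : G.dist u a ≤ (q.takeUntil a hq).length := SimpleGraph.dist_le _
    have h2 : G.dist a c ≤ (q.dropUntil a hq).length := SimpleGraph.dist_le _
    omega
  · -- a on the final segment after c
    have hrlen := congrArg SimpleGraph.Walk.length (p.take_spec hc)
    rw [SimpleGraph.Walk.length_append] at hrlen
    have hsplit := congrArg SimpleGraph.Walk.length ((p.dropUntil c hc).take_spec hr)
    rw [SimpleGraph.Walk.length_append] at hsplit
    have h1 : G.dist c a ≤ ((p.dropUntil c hc).takeUntil a hr).length := SimpleGraph.dist_le _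
    have h2 : G.dist a v ≤ ((p.dropUntil c hc).dropUntil a hr).length := SimpleGraph.dist_le _
    have hca : G.dist a c = G.dist c a := SimpleGraph.dist_comm ..
    omega

/-- For a middle vertex on a geodesic, the distances add up. -/
lemma dist_add_on_geodesic [DecidableEq V] {G : SimpleGraph V} (hG : G.Connected) {u v : V}
    (p : G.Walk u v) (hp : p.length = G.dist u v) {a b c : V}
    (ha : a ∈ p.support) (hb : b ∈ p.support) (hc : c ∈ p.support)
    (h1 : G.dist u a ≤ G.dist u b) (h2 : G.dist u b ≤ G.dist u c) :
    G.dist a b + G.dist b c = G.dist a c := by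
  have e1 := dist_le_sub_on_geodesic hG p hp ha hb h1
  have e2 := dist_le_sub_on_geodesic hG p hp hb hc h2
  have e3 := dist_le_sub_on_geodesic hG p hp ha hc (h1.trans h2)
  have t1 : G.dist u b ≤ G.dist u a + G.dist a b := hG.dist_triangle
  have t2 : G.dist u c ≤ G.dist u b + G.dist b c := hG.dist_triangle
  have t3 : G.dist a c ≤ G.dist a b + G.dist b c := hG.dist_triangle
  have t4 : G.dist u c ≤ G.dist u a + G.dist a c := hG.dist_triangle
  omega

theorem gp_le_order_sub_diam_add_one [Fintype V] (G : SimpleGraph V)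
    (hG : G.Connected) :
    gpNum G ≤ Fintype.card V - G.diam + 1 := by
  have hne : Nonempty V := hG.nonempty
  classical
  -- it suffices to bound every candidate cardinality
  have hempty : IsGPSet G ((∅ : Finset V) : Set V) := by
    intro a ha; simp at ha
  refine csSup_le ⟨0, ⟨∅, hempty, by simp⟩⟩ ?_
  rintro n ⟨S, hS, rfl⟩
  -- diametral pair and geodesic
  obtain ⟨u, v, huv⟩ := SimpleGraph.exists_dist_eq_diam (G := G)
  obtain ⟨p, hpath, hplen⟩ := hG.exists_path_of_dist u v
  set P : Finset V := p.support.toFinset with hPdef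
  have hPcard : P.card = G.diam + 1 := by
    rw [hPdef, List.toFinset_card_of_nodup hpath.support_nodup,
      SimpleGraph.Walk.length_support, hplen, huv]
  -- S meets the geodesic in at most 2 vertices
  have hcap : (S ∩ P).card ≤ 2 := by
    by_contra hlt
    push_neg at hlt
    obtain ⟨a, haS, b, hbS, c, hcS, hab, hac, hbc⟩ := Finset.two_lt_card.mp hlt
    obtain ⟨haS', haP⟩ := Finset.mem_inter.mp haS
    obtain ⟨hbS', hbP⟩ := Finset.mem_inter.mp hbS
    obtain ⟨hcS', hcP⟩ := Finset.mem_inter.mp hcS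
    rw [hPdef, List.mem_toFinset] at haP hbP hcP
    -- distances to u are distinct
    have hinj : ∀ x y : V, x ∈ p.support → y ∈ p.support → G.dist u x = G.dist u y → x = y := by
      intro x y hx hy hxy
      have h1 := dist_le_sub_on_geodesic hG p hplen hx hy hxy.le
      have h2 : G.dist x y = 0 := by omega
      exact (hG.dist_eq_zero_iff).mp h2
    -- apply the GP property to the middle vertex
    have key : ∀ x y z : V, x ∈ p.support → y ∈ p.support → z ∈ p.support →
        x ∈ S → y ∈ S → z ∈ S → x ≠ y → y ≠ z → x ≠ z →
        G.dist u x ≤ G.dist u y → G.dist u y ≤ G.dist u z → False := by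
      intro x y z hx hy hz hxS hyS hzS hxy hyz hxz h1 h2
      have hconj : G.Reachable x z ∧ G.dist x y + G.dist y z = G.dist x z :=
        ⟨hG.preconnected x z, dist_add_on_geodesic hG p hplen hx hy hz h1 h2⟩
      exact hS x (Finset.mem_coe.mpr hxS) y (Finset.mem_coe.mpr hyS) z (Finset.mem_coe.mpr hzS)
        hxy hyz hxz hconj
    rcases le_total (G.dist u a) (G.dist u b) with h1 | h1 <;>
      rcases le_total (G.dist u b) (G.dist u c) with h2 | h2 <;>
      rcases le_total (G.dist u a) (G.dist u c) with h3 | h3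
    · exact key a b c haP hbP hcP haS' hbS' hcS' hab hbc hac h1 h2
    · exact key a b c haP hbP hcP haS' hbS' hcS' hab hbc hac h1 h2
    · exact key a c b haP hcP hbP haS' hcS' hbS' hac hbc.symm hab h3 h2
    · exact key c a b hcP haP hbP hcS' haS' hbS' hac.symm hab hbc.symm h3 h1
    · exact key b a c hbP haP hcP hbS' haS' hcS' hab.symm hac hbc h1 h3
    · exact key b c a hbP hcP haP hbS' hcS' haS' hbc hac.symm hab.symm h2 h3
    · exact key c b a hcP hbP haP hcS' hbS' haS' hbc.symm hab.symm hac.symm h2 h1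
    · exact key c b a hcP hbP haP hcS' hbS' haS' hbc.symm hab.symm hac.symm h2 h1
  -- counting
  have hsplit : S.card = (S ∩ P).card + (S \ P).card := by
    rw [Finset.card_inter_add_card_sdiff]
  have hPle : P.card ≤ Fintype.card V := Finset.card_le_univ P
  have hsdiff : (S \ P).card ≤ Fintype.card V - P.card := by
    have : (S \ P).card + P.card ≤ Fintype.card V := by
      rw [← Finset.card_union_of_disjoint (Finset.sdiff_disjoint)]
      exact Finset.card_le_univ _
    omega
  omega
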